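/- arXiv:0906.2334 — 4 statements merged into one kernel-verified Lean document; each statement's English description precedes it below -/
import Mathlib

section
/- For every ε > 0 and every x > 0, (1 − Φ(x + ε/x))/(1 − Φ(x)) ≤ 1 − ε·exp(−1.5ε). -/
open Real MeasureTheory

/-- standard normal density -/
noncomputable def stdPhi (t : ℝ) : ℝ := (Real.sqrt (2 * Real.pi))⁻¹ * Real.exp (-t ^ 2 / 2)

/-- standard normal cumulative distribution function -/
noncomputable def stdCDF (x : ℝ) : ℝ := ∫ t in Set.Iic x, stdPhi t

lemma stdPhi_eq (t : ℝ) : stdPhi t = (Real.sqrt (2 * Real.pi))⁻¹ * Real.exp (-(1/2) * t ^ 2) := by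
  rw [stdPhi]; ring_nf

lemma stdPhi_pos (t : ℝ) : 0 < stdPhi t := by
  have : 0 < Real.sqrt (2 * Real.pi) := Real.sqrt_pos.2 (by positivity)
  exact mul_pos (inv_pos.2 this) (Real.exp_pos _)

lemma integrable_stdPhi : Integrable stdPhi := by
  have h := integrable_exp_neg_mul_sq (by norm_num : (0:ℝ) < 1/2)
  have := h.const_mul (Real.sqrt (2 * Real.pi))⁻¹
  refine this.congr (Filter.Eventually.of_forall fun t => ?_)
  rw [stdPhi_eq]

lemma integral_stdPhi : ∫ t, stdPhi t = 1 := by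
  simp_rw [stdPhi_eq]
  rw [MeasureTheory.integral_const_mul, integral_gaussian]
  rw [div_div_eq_mul_div, div_one, mul_comm 2 π, mul_comm]
  rw [mul_inv_cancel₀]
  positivity

noncomputable def stdT (x : ℝ) : ℝ := ∫ t in Set.Ioi x, stdPhi t

lemma one_sub_stdCDF (x : ℝ) : 1 - stdCDF x = stdT x := by
  have h := MeasureTheory.integral_add_compl (μ := volume) (measurableSet_Iic (a := x))
    integrable_stdPhi
  rw [Set.compl_Iic] at h
  have : stdCDF x + stdT x = 1 := by rw [stdCDF, stdT, ← integral_stdPhi, h]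
  linarith

lemma stdT_pos (x : ℝ) : 0 < stdT x := by
  rw [stdT]
  refine (setIntegral_pos_iff_support_of_nonneg_ae ?_ ?_).2 ?_
  · exact Filter.Eventually.of_forall fun t => (stdPhi_pos t).le
  · exact integrable_stdPhi.integrableOn
  · have : (Function.support stdPhi) = Set.univ := by
      ext t; simp [Function.support, (stdPhi_pos t).ne']
    rw [this, Set.univ_inter]
    simp [Real.volume_Ioi]

lemma stdT_anti {a b : ℝ} (h : a ≤ b) : stdT b ≤ stdT a := by
  rw [stdT, stdT]
  refine setIntegral_mono_set integrable_stdPhi.integrableOn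
    (Filter.Eventually.of_forall fun t => (stdPhi_pos t).le)
    (HasSubset.Subset.eventuallyLE (Set.Ioi_subset_Ioi h))

lemma integral_mul_exp_Ioi (x : ℝ) :
    ∫ t in Set.Ioi x, t * Real.exp (-(1/2) * t ^ 2) = Real.exp (-(1/2) * x ^ 2) := by
  have A : ∀ t ∈ Set.Ici x, HasDerivAt (fun t => -Real.exp (-(1/2) * t ^ 2))
      (t * Real.exp (-(1/2) * t ^ 2)) t := by
    intro t _
    have := (((hasDerivAt_pow 2 t).const_mul (-(1/2 : ℝ))).exp).neg
    refine this.congr_deriv ?_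
    push_cast; ring
  have B : Filter.Tendsto (fun y : ℝ => -Real.exp (-(1/2) * y ^ 2)) Filter.atTop (nhds 0) := by
    rw [show (0:ℝ) = -0 by ring]
    refine Filter.Tendsto.neg ?_
    refine Real.tendsto_exp_atBot.comp ?_
    exact (Filter.tendsto_pow_atTop two_ne_zero).const_mul_atTop_of_neg (by norm_num)
  have hint : IntegrableOn (fun t : ℝ => t * Real.exp (-(1/2) * t ^ 2)) (Set.Ioi x) :=
    (integrable_mul_exp_neg_mul_sq (by norm_num : (0:ℝ) < 1/2)).integrableOn
  have := MeasureTheory.integral_Ioi_of_hasDerivAt_of_tendsto' A hint B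
  rw [this]; ring

lemma stdT_le (x : ℝ) (hx : 0 < x) :
    stdT x ≤ (Real.sqrt (2 * Real.pi))⁻¹ * Real.exp (-(1/2) * x ^ 2) / x := by
  have h1 : stdT x ≤ ∫ t in Set.Ioi x, (t / x) * stdPhi t := by
    rw [stdT]
    refine setIntegral_mono_on integrable_stdPhi.integrableOn ?_ measurableSet_Ioi ?_
    · have hi := (integrable_mul_exp_neg_mul_sq (by norm_num : (0:ℝ) < 1/2)).integrableOn
        (s := Set.Ioi x)
      refine (hi.const_mul ((Real.sqrt (2 * Real.pi))⁻¹ / x)).congr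
        (Filter.Eventually.of_forall fun t => ?_)
      simp only [stdPhi_eq]; ring
    · intro t ht
      have h1 : 1 ≤ t / x := (one_le_div hx).2 (le_of_lt ht)
      nlinarith [stdPhi_pos t, (stdPhi_pos t).le]
  calc stdT x ≤ ∫ t in Set.Ioi x, (t / x) * stdPhi t := h1
    _ = ((Real.sqrt (2 * Real.pi))⁻¹ / x) * ∫ t in Set.Ioi x, t * Real.exp (-(1/2) * t ^ 2) := by
        rw [← MeasureTheory.integral_const_mul]
        refine setIntegral_congr_fun measurableSet_Ioi fun t _ => ?_
        simp only [stdPhi_eq]; ring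
    _ = (Real.sqrt (2 * Real.pi))⁻¹ * Real.exp (-(1/2) * x ^ 2) / x := by
        rw [integral_mul_exp_Ioi]; ring

lemma exp_int (x b : ℝ) (hx : x ≠ 0) (hxb : x ≤ b) :
    ∫ t in Set.Ioc x b, Real.exp (-x * (t - x)) = (1 - Real.exp (-x * (b - x))) / x := by
  rw [← intervalIntegral.integral_of_le hxb]
  have A : ∀ t ∈ Set.uIcc x b, HasDerivAt (fun t => -(1/x) * Real.exp (-x * (t - x)))
      (Real.exp (-x * (t - x))) t := by
    intro t _
    have h1 : HasDerivAt (fun t : ℝ => -x * (t - x)) (-x) t := by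
      simpa using (((hasDerivAt_id t).sub_const x).const_mul (-x))
    have := (h1.exp).const_mul (-(1/x))
    refine this.congr_deriv ?_
    field_simp
  have hcont : IntervalIntegrable (fun t => Real.exp (-x * (t - x))) volume x b :=
    (Continuous.intervalIntegrable (by continuity) x b)
  rw [intervalIntegral.integral_eq_sub_of_hasDerivAt A hcont]
  simp only [sub_self, mul_zero, Real.exp_zero]
  field_simp
  ring

lemma mid_lower (ε x : ℝ) (hε : 0 < ε) (hx : 0 < x) (h : ε ≤ x ^ 2) :
    (Real.sqrt (2 * Real.pi))⁻¹ * Real.exp (-(1/2) * x ^ 2) / x * (ε * Real.exp (-1.5 * ε))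
      ≤ ∫ t in Set.Ioc x (x + ε / x), stdPhi t := by
  set c : ℝ := (Real.sqrt (2 * Real.pi))⁻¹ with hc
  have hcpos : 0 < c := inv_pos.2 (Real.sqrt_pos.2 (by positivity))
  set b : ℝ := x + ε / x with hb
  have hxb : x ≤ b := by rw [hb]; nlinarith [div_pos hε hx]
  -- pointwise bound
  have hpt : ∀ t ∈ Set.Ioc x b,
      c * Real.exp (-ε/2) * Real.exp (-(1/2) * x ^ 2) * Real.exp (-x * (t - x)) ≤ stdPhi t := by
    intro t ht
    rw [stdPhi_eq, ← hc]
    have h1 : x < t := ht.1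
    have h2 : t ≤ b := ht.2
    have h3 : t - x ≤ ε / x := by rw [hb] at h2; linarith
    have h4 : (t - x) ^ 2 ≤ ε := by
      have : (t - x) ^ 2 ≤ (ε / x) ^ 2 := by nlinarith
      calc (t - x) ^ 2 ≤ (ε / x) ^ 2 := this
        _ = ε ^ 2 / x ^ 2 := by ring
        _ ≤ ε ^ 2 / ε := by
            apply div_le_div_of_nonneg_left (by positivity) hε h
        _ = ε := by field_simp
    have hle : -ε/2 + (-(1/2) * x ^ 2) + (-x * (t - x)) ≤ -(1/2) * t ^ 2 := by nlinarith
    calc c * Real.exp (-ε/2) * Real.exp (-(1/2) * x ^ 2) * Real.exp (-x * (t - x))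
        = c * Real.exp (-ε/2 + (-(1/2) * x ^ 2) + (-x * (t - x))) := by
          rw [Real.exp_add, Real.exp_add]; ring
      _ ≤ c * Real.exp (-(1/2) * t ^ 2) :=
          mul_le_mul_of_nonneg_left (Real.exp_le_exp.2 hle) hcpos.le
  -- lower integral
  have hintlb : IntegrableOn
      (fun t => c * Real.exp (-ε/2) * Real.exp (-(1/2) * x ^ 2) * Real.exp (-x * (t - x)))
      (Set.Ioc x b) := by
    apply Continuous.integrableOn_Ioc
    continuity
  have hmono := setIntegral_mono_on hintlb integrable_stdPhi.integrableOn measurableSet_Ioc hpt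
  have hcalc : ∫ t in Set.Ioc x b,
      c * Real.exp (-ε/2) * Real.exp (-(1/2) * x ^ 2) * Real.exp (-x * (t - x))
      = c * Real.exp (-ε/2) * Real.exp (-(1/2) * x ^ 2) * ((1 - Real.exp (-ε)) / x) := by
    rw [MeasureTheory.integral_const_mul, exp_int x b hx.ne' hxb]
    have : -x * (b - x) = -ε := by
      rw [hb]; field_simp; ring
    rw [this]
  rw [hcalc] at hmono
  refine le_trans ?_ hmono
  -- algebra: c * e^{-x²/2}/x * ε e^{-1.5ε} ≤ c e^{-ε/2} e^{-x²/2} (1-e^{-ε})/x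
  have key : ε * Real.exp (-1.5 * ε) ≤ Real.exp (-ε/2) * (1 - Real.exp (-ε)) := by
    have h1 : ε * Real.exp (-ε) ≤ 1 - Real.exp (-ε) := by
      have h2 : Real.exp ε * Real.exp (-ε) = 1 := by rw [← Real.exp_add]; simp
      have h3 := mul_le_mul_of_nonneg_right (Real.add_one_le_exp ε) (Real.exp_pos (-ε)).le
      nlinarith
    calc ε * Real.exp (-1.5 * ε) = Real.exp (-ε/2) * (ε * Real.exp (-ε)) := by
          rw [show (-1.5*ε : ℝ) = -ε/2 + -ε by ring, Real.exp_add]; ring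
      _ ≤ Real.exp (-ε/2) * (1 - Real.exp (-ε)) :=
          mul_le_mul_of_nonneg_left h1 (Real.exp_pos _).le
  have hpos : 0 < c * Real.exp (-(1/2) * x ^ 2) / x := by positivity
  calc c * Real.exp (-(1/2) * x ^ 2) / x * (ε * Real.exp (-1.5 * ε))
      ≤ c * Real.exp (-(1/2) * x ^ 2) / x * (Real.exp (-ε/2) * (1 - Real.exp (-ε))) :=
        mul_le_mul_of_nonneg_left key hpos.le
    _ = c * Real.exp (-ε/2) * Real.exp (-(1/2) * x ^ 2) * ((1 - Real.exp (-ε)) / x) := by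
        field_simp

lemma key_lemma (ε x : ℝ) (hε : 0 < ε) (hx : 0 < x) (h : ε ≤ x ^ 2) :
    stdT (x + ε / x) / stdT x ≤ 1 - ε * Real.exp (-1.5 * ε) := by
  set b : ℝ := x + ε / x with hb
  have hxb : x ≤ b := by rw [hb]; nlinarith [div_pos hε hx]
  have hsplit : stdT x = (∫ t in Set.Ioc x b, stdPhi t) + stdT b := by
    rw [stdT, stdT, ← MeasureTheory.setIntegral_union (Set.Ioc_disjoint_Ioi le_rfl)
      measurableSet_Ioi integrable_stdPhi.integrableOn integrable_stdPhi.integrableOn,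
      Set.Ioc_union_Ioi_eq_Ioi hxb]
  have hI : stdT x * (ε * Real.exp (-1.5 * ε)) ≤ ∫ t in Set.Ioc x b, stdPhi t := by
    refine le_trans ?_ (mid_lower ε x hε hx h)
    refine mul_le_mul_of_nonneg_right (stdT_le x hx) (by positivity)
  rw [div_le_iff₀ (stdT_pos x)]
  nlinarith [stdT_pos x, stdT_pos b]

theorem stmt_4 (ε x : ℝ) (hε : 0 < ε) (hx : 0 < x) :
    (1 - stdCDF (x + ε / x)) / (1 - stdCDF x) ≤ 1 - ε * Real.exp (-1.5 * ε) := by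
  rw [one_sub_stdCDF, one_sub_stdCDF]
  rcases le_or_gt ε (x ^ 2) with h | h
  · exact key_lemma ε x hε hx h
  · set y : ℝ := Real.sqrt ε with hy
    have hypos : 0 < y := Real.sqrt_pos.2 hε
    have hysq : y ^ 2 = ε := Real.sq_sqrt hε.le
    have hxy : x ≤ y := by nlinarith
    have h2y : y + ε / y ≤ x + ε / x := by
      have hεy : ε / y = y := by rw [← hysq]; field_simp
      rw [hεy]
      have : x + ε / x - 2 * y = (x ^ 2 + ε - 2 * y * x) / x := by field_simp
      nlinarith [div_nonneg (by nlinarith [sq_nonneg (x - y)] : (0:ℝ) ≤ x ^ 2 + ε - 2 * y * x) hx.le]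
    have hnum : stdT (x + ε / x) ≤ stdT (y + ε / y) := stdT_anti h2y
    have hden : stdT y ≤ stdT x := stdT_anti hxy
    calc stdT (x + ε / x) / stdT x ≤ stdT (y + ε / y) / stdT y :=
          div_le_div₀ (stdT_pos _).le hnum (stdT_pos y) hden
      _ ≤ 1 - ε * Real.exp (-1.5 * ε) := key_lemma ε y hε hypos (le_of_eq hysq.symm)
end

section
/- Let X_1, …, X_n be real numbers with order statistics X_{(1)} ≤ ⋯ ≤ X_{(n)}, sample mean X̄, and let X̄_{[a,b]} denote the average of X_{(a)}, …, X_{(b)}. Then (1/n)·∑_{i=1}^n (X_i − X̄)² = ∑_{i=1}^{n−1} (i(n−i)/n²)·(X̄_{[i+1,n]} − X̄_{[1,i]})·(X_{(i+1)} − X_{(i)}). -/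
open Finset

private lemma tele_Ico (Y : ℕ → ℝ) {p q : ℕ} (h : p ≤ q) :
    ∑ k ∈ Ico p q, (Y (k + 1) - Y k) = Y q - Y p := by
  rw [Finset.sum_Ico_eq_sub _ h, Finset.sum_range_sub, Finset.sum_range_sub]
  ring

/-- Triple sum reindexing: pairs p < q with k ∈ [p,q) ↔ k < n-1, p ≤ k, k < q < n. -/
private lemma swap_sum (n : ℕ) (f : ℕ → ℕ → ℕ → ℝ) :
    ∑ q ∈ range n, ∑ p ∈ range q, ∑ k ∈ Ico p q, f p q k =
      ∑ k ∈ range (n - 1), ∑ q ∈ Ico (k + 1) n, ∑ p ∈ range (k + 1), f p q k := by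
  have e1 : ∑ x ∈ (range n).sigma (fun q => (range q).sigma (fun p => Ico p q)),
      f x.2.1 x.1 x.2.2 = ∑ q ∈ range n, ∑ p ∈ range q, ∑ k ∈ Ico p q, f p q k := by
    rw [Finset.sum_sigma]
    exact Finset.sum_congr rfl fun q _ => by rw [Finset.sum_sigma]
  have e2 : ∑ x ∈ (range (n-1)).sigma (fun k => (Ico (k+1) n).sigma (fun _ => range (k+1))),
      f x.2.2 x.2.1 x.1 = ∑ k ∈ range (n - 1), ∑ q ∈ Ico (k + 1) n, ∑ p ∈ range (k + 1),
        f p q k := by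
    rw [Finset.sum_sigma]
    exact Finset.sum_congr rfl fun k _ => by rw [Finset.sum_sigma]
  rw [← e1, ← e2]
  refine Finset.sum_nbij' (fun x => ⟨x.2.2, x.1, x.2.1⟩) (fun x => ⟨x.2.1, x.2.2, x.1⟩)
      ?_ ?_ ?_ ?_ ?_
  · rintro ⟨q, p, k⟩ h
    simp only [Finset.mem_sigma, Finset.mem_range, Finset.mem_Ico] at h ⊢
    omega
  · rintro ⟨k, q, p⟩ h
    simp only [Finset.mem_sigma, Finset.mem_range, Finset.mem_Ico] at h ⊢
    omega
  · rintro ⟨q, p, k⟩ _; rfl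
  · rintro ⟨k, q, p⟩ _; rfl
  · rintro ⟨q, p, k⟩ _; rfl

private lemma var_double (n : ℕ) (Y : ℕ → ℝ) :
    (n : ℝ) * ∑ j ∈ range n, (Y j) ^ 2 - (∑ j ∈ range n, Y j) ^ 2 =
      ∑ q ∈ range n, ∑ p ∈ range q, (Y q - Y p) ^ 2 := by
  induction n with
  | zero => simp
  | succ m ih =>
      rw [Finset.sum_range_succ (f := fun q => ∑ p ∈ range q, (Y q - Y p) ^ 2), ← ih]
      have h1 : ∑ p ∈ range m, (Y m - Y p) ^ 2 =
          (m : ℝ) * (Y m) ^ 2 - 2 * Y m * (∑ p ∈ range m, Y p) + ∑ p ∈ range m, (Y p) ^ 2 := by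
        rw [Finset.sum_congr rfl (fun p _ => by ring :
          ∀ p ∈ range m, (Y m - Y p) ^ 2 = (Y m)^2 - 2 * Y m * Y p + (Y p)^2)]
        rw [Finset.sum_add_distrib, Finset.sum_sub_distrib, ← Finset.mul_sum,
          Finset.sum_const, Finset.card_range, nsmul_eq_mul]
      rw [h1, Finset.sum_range_succ (f := fun j => (Y j) ^ 2), Finset.sum_range_succ (f := Y)]
      push_cast
      ring

/-- Yatracos's sample variance decomposition: if `Y` lists the order statistics
(a monotone rearrangement of `X 0, …, X (n-1)`), then the sample variance equals
the sum of the spacing components. Here groups are `Y 0, …, Y i` (size `i+1`) and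
`Y (i+1), …, Y (n-1)` (size `n-i-1`), matching 1-based indices `1,…,i` and `i+1,…,n`. -/
theorem stmt_5 (n : ℕ) (hn : 1 ≤ n) (X Y : ℕ → ℝ)
    (σ : Equiv.Perm ℕ) (hσ : ∀ k, n ≤ k → σ k = k)
    (hXY : ∀ k, Y k = X (σ k))
    (hmono : ∀ i j, i ≤ j → j < n → Y i ≤ Y j) :
    (1 / (n : ℝ)) * ∑ j ∈ range n, (X j - (∑ l ∈ range n, X l) / n) ^ 2 =
      ∑ i ∈ range (n - 1),
        (((i + 1) * (n - (i + 1)) : ℝ) / (n : ℝ) ^ 2) *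
          ((∑ j ∈ Ico (i + 1) n, Y j) / ((n : ℝ) - (i + 1)) -
            (∑ j ∈ range (i + 1), Y j) / ((i : ℝ) + 1)) *
          (Y (i + 1) - Y i) := by
  have hnR : (0 : ℝ) < n := by exact_mod_cast hn
  -- replace sums over X by sums over Y via the permutation σ
  have hperm : ∀ g : ℝ → ℝ, ∑ j ∈ range n, g (Y j) = ∑ j ∈ range n, g (X j) := by
    intro g
    refine Finset.sum_equiv σ ?_ ?_
    · intro k
      simp only [Finset.mem_range]
      constructor
      · intro hk
        by_contra h
        have := hσ (σ k) (le_of_not_gt h)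
        have := σ.injective this
        omega
      · intro hk
        by_contra h
        rw [hσ k (le_of_not_gt h)] at hk
        omega
    · intro k _
      rw [hXY k]
  have hsum : ∑ l ∈ range n, X l = ∑ l ∈ range n, Y l := (hperm id).symm
  have hsq : ∑ j ∈ range n, (X j - (∑ l ∈ range n, X l) / n) ^ 2 =
      ∑ j ∈ range n, (Y j - (∑ l ∈ range n, Y l) / n) ^ 2 := by
    rw [hsum]; exact (hperm (fun t => (t - (∑ l ∈ range n, Y l) / n) ^ 2)).symm
  rw [hsq]
  set S := ∑ l ∈ range n, Y l with hS
  -- LHS equals (n ∑ Y² - S²)/n²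
  have hLHS : (1 / (n : ℝ)) * ∑ j ∈ range n, (Y j - S / n) ^ 2 =
      ((n : ℝ) * ∑ j ∈ range n, (Y j) ^ 2 - S ^ 2) / (n : ℝ) ^ 2 := by
    have : ∑ j ∈ range n, (Y j - S / n) ^ 2 =
        ∑ j ∈ range n, ((Y j) ^ 2 - 2 * (S / n) * Y j + (S / n) ^ 2) :=
      Finset.sum_congr rfl (fun j _ => by ring)
    rw [this, Finset.sum_add_distrib, Finset.sum_sub_distrib, ← Finset.mul_sum, ← hS,
      Finset.sum_const, Finset.card_range, nsmul_eq_mul]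
    field_simp
    ring
  rw [hLHS]
  -- core algebraic identity
  have hcore : (n : ℝ) * ∑ j ∈ range n, (Y j) ^ 2 - S ^ 2 =
      ∑ k ∈ range (n - 1), (Y (k + 1) - Y k) *
        (((k : ℝ) + 1) * (∑ j ∈ Ico (k + 1) n, Y j) -
          ((n : ℝ) - ((k : ℝ) + 1)) * (∑ j ∈ range (k + 1), Y j)) := by
    rw [hS, var_double]
    have step1 : ∑ q ∈ range n, ∑ p ∈ range q, (Y q - Y p) ^ 2 =
        ∑ q ∈ range n, ∑ p ∈ range q, ∑ k ∈ Ico p q, (Y q - Y p) * (Y (k + 1) - Y k) := by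
      refine Finset.sum_congr rfl fun q _ => Finset.sum_congr rfl fun p hp => ?_
      rw [← Finset.mul_sum, tele_Ico Y (le_of_lt (Finset.mem_range.mp hp))]
      ring
    rw [step1, swap_sum n (fun p q k => (Y q - Y p) * (Y (k + 1) - Y k))]
    refine Finset.sum_congr rfl fun k hk => ?_
    have hk' : k + 1 ≤ n := by
      have := Finset.mem_range.mp hk; omega
    have hcard : ((n - (k + 1) : ℕ) : ℝ) = (n : ℝ) - ((k : ℝ) + 1) := by
      push_cast [Nat.cast_sub hk']; ring
    have inner : ∀ q, ∑ p ∈ range (k + 1), (Y q - Y p) * (Y (k + 1) - Y k) =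
        (((k : ℝ) + 1) * Y q - ∑ p ∈ range (k + 1), Y p) * (Y (k + 1) - Y k) := by
      intro q
      rw [← Finset.sum_mul, Finset.sum_sub_distrib, Finset.sum_const, Finset.card_range,
        nsmul_eq_mul]
      push_cast
      ring
    rw [Finset.sum_congr rfl fun q _ => inner q, ← Finset.sum_mul, Finset.sum_sub_distrib,
      ← Finset.mul_sum, Finset.sum_const, Nat.card_Ico, nsmul_eq_mul, hcard]
    ring
  rw [hcore, Finset.sum_div]
  refine Finset.sum_congr rfl fun k hk => ?_
  have hkn : k + 1 < n := by have := Finset.mem_range.mp hk; omega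
  have h1 : ((k : ℝ) + 1) ≠ 0 := by positivity
  have h2 : ((n : ℝ) - ((k : ℝ) + 1)) ≠ 0 := by
    have : ((k : ℝ) + 1) < n := by exact_mod_cast hkn
    linarith
  field_simp
end

section
/- Let Z_1, …, Z_n be i.i.d. standard normal random variables with order statistics Z_{(1)} ≤ ⋯ ≤ Z_{(n)}. For any ε > 0 and index i, P(Z_{(i)}·(Z_{(i+1)} − Z_{(i)}) > ε and Z_{(i)} > 0) ≤ (1 − ε·e^{−1.5ε})^{n−i}. -/
open Real MeasureTheory ProbabilityTheory

/-- `ord f j` is the `j`-th smallest value (0-based) among `f 0, …, f (n-1)`,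
i.e. the `(j+1)`-th order statistic; it is `0` for out-of-range `j`. -/
noncomputable def ord {n : ℕ} (f : Fin n → ℝ) (j : ℕ) : ℝ :=
  if h : j < n then f (Tuple.sort f ⟨j, h⟩) else 0

section Helpers

set_option linter.unusedVariables false

lemma exp_neg_le_aux (ε : ℝ) (hε : 0 < ε) : Real.exp (-ε) ≤ 1 - ε * Real.exp (-1.5 * ε) := by
  have h1 : ε + 1 ≤ Real.exp ε := Real.add_one_le_exp ε
  have h2 : (1:ℝ) ≤ Real.exp (0.5 * ε) := Real.one_le_exp (by linarith)
  have h3 : 0 < Real.exp (-1.5 * ε) := Real.exp_pos _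
  have h8 : Real.exp (-ε) = Real.exp (-1.5 * ε) * Real.exp (0.5 * ε) := by
    rw [← Real.exp_add]; ring_nf
  have h4 : Real.exp (-1.5 * ε) * (Real.exp (0.5 * ε) * Real.exp ε) = 1 := by
    rw [← Real.exp_add, ← Real.exp_add]; ring_nf; exact Real.exp_zero
  nlinarith [mul_le_mul_of_nonneg_left h1 (le_of_lt (mul_pos h3 (Real.exp_pos (0.5*ε)))),
    mul_le_mul_of_nonneg_left h2 (le_of_lt (mul_pos h3 hε))]

lemma gauss_tail {ε x : ℝ} (hε : 0 < ε) (hx : 0 < x) :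
    gaussianReal 0 1 (Set.Ioi (x + ε / x)) ≤
      ENNReal.ofReal (Real.exp (-ε)) * gaussianReal 0 1 (Set.Ioi x) := by
  set d := ε / x with hddef
  have hd : 0 < d := div_pos hε hx
  have hxd : x * d = ε := mul_div_cancel₀ ε hx.ne'
  have h1 : (1 : NNReal) ≠ 0 := one_ne_zero
  rw [gaussianReal_apply _ h1, gaussianReal_apply _ h1]
  have key : ∫⁻ t in Set.Ioi (x + d), gaussianPDF 0 1 t
      = ∫⁻ t in Set.Ioi x, gaussianPDF 0 1 (t + d) := by
    rw [← lintegral_indicator measurableSet_Ioi _, ← lintegral_indicator measurableSet_Ioi _]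
    rw [← lintegral_add_right_eq_self (fun t => (Set.Ioi (x+d)).indicator (gaussianPDF 0 1) t) d]
    congr 1
    ext t
    by_cases h : t ∈ Set.Ioi x
    · rw [Set.indicator_of_mem h, Set.indicator_of_mem (by simp at h ⊢; linarith)]
    · rw [Set.indicator_of_notMem h, Set.indicator_of_notMem (by simp at h ⊢; linarith)]
  rw [key, ← lintegral_const_mul' _ _ ENNReal.ofReal_ne_top]
  refine setLIntegral_mono (measurable_const.mul (measurable_gaussianPDFReal 0 1).ennreal_ofReal) (fun t ht => ?_)
  simp only [Set.mem_Ioi] at ht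
  unfold gaussianPDF
  rw [← ENNReal.ofReal_mul (Real.exp_nonneg _)]
  apply ENNReal.ofReal_le_ofReal
  unfold gaussianPDFReal
  push_cast
  have hmain : Real.exp (-(t + d - 0)^2/(2*1)) ≤ Real.exp (-ε) * Real.exp (-(t-0)^2/(2*1)) := by
    rw [← Real.exp_add]
    apply Real.exp_le_exp.2
    have htd : x * d ≤ t * d := by nlinarith
    nlinarith
  have hc : (0:ℝ) ≤ (Real.sqrt (2*π*1))⁻¹ := inv_nonneg.2 (Real.sqrt_nonneg _)
  nlinarith [mul_le_mul_of_nonneg_left hmain hc]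

noncomputable def gm : Measure ℝ := gaussianReal 0 1

instance : IsProbabilityMeasure gm := by unfold gm; infer_instance

/-- the piece event: `g j0 > 0`, lex-below for indices outside `S ∪ {j0}`,
and `g j > t (g j0)` for `j ∈ S`. -/
def pieceSet (n : ℕ) (t : ℝ → ℝ) (j0 : Fin n) (S : Finset (Fin n)) : Set (Fin n → ℝ) :=
  {g | (0 < g j0 ∧ ∀ j, j ≠ j0 → j ∉ S → (g j < g j0 ∨ (g j = g j0 ∧ j < j0))) ∧
       ∀ j ∈ S, t (g j0) < g j}

section Piece

variable {n : ℕ} (t : ℝ → ℝ) (j0 : Fin n) (S : Finset (Fin n)) (hj0 : j0 ∉ S)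

/-- condition on the coordinates outside `S` -/
def cSet (hj0 : j0 ∉ S) : Set ({j : Fin n // j ∉ S} → ℝ) :=
  {b | 0 < b ⟨j0, hj0⟩} ∩
    ⋂ j : {j : Fin n // j ∉ S}, {b | (j : Fin n) ≠ j0 →
      (b j < b ⟨j0, hj0⟩ ∨ (b j = b ⟨j0, hj0⟩ ∧ (j : Fin n) < j0))}

def sSet (hj0 : j0 ∉ S) :
    Set (({j : Fin n // j ∉ S} → ℝ) × ({j : Fin n // ¬ j ∉ S} → ℝ)) :=
  (Prod.fst ⁻¹' (cSet j0 S hj0)) ∩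
    ⋂ j : {j : Fin n // ¬ j ∉ S}, {y | t (y.1 ⟨j0, hj0⟩) < y.2 j}

lemma measurable_cSet : MeasurableSet (cSet j0 S hj0) := by
  apply MeasurableSet.inter
  · exact measurable_pi_apply _ measurableSet_Ioi
  · refine MeasurableSet.iInter fun j => ?_
    by_cases hj : (j : Fin n) = j0
    · simp [hj]
    · simp only [hj, ne_eq, not_false_eq_true, forall_true_left]
      apply MeasurableSet.union
      · exact measurableSet_lt (measurable_pi_apply _) (measurable_pi_apply _)
      · by_cases hlt : (j : Fin n) < j0
        · simp only [hlt, and_true]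
          exact measurableSet_eq_fun (measurable_pi_apply _) (measurable_pi_apply _)
        · simp only [hlt, and_false]
          exact MeasurableSet.empty

lemma measurable_sSet (ht : Measurable t) : MeasurableSet (sSet t j0 S hj0) := by
  apply MeasurableSet.inter
  · exact measurable_fst (measurable_cSet j0 S hj0)
  · refine MeasurableSet.iInter fun j => ?_
    exact measurableSet_lt (ht.comp ((measurable_pi_apply _).comp measurable_fst))
      ((measurable_pi_apply j).comp measurable_snd)

lemma pieceSet_eq_preimage :
    pieceSet n t j0 S =
      (MeasurableEquiv.piEquivPiSubtypeProd (fun _ : Fin n => ℝ) (fun j => j ∉ S)) ⁻¹'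
        (sSet t j0 S hj0) := by
  ext g
  simp only [pieceSet, sSet, cSet, Set.mem_setOf_eq, Set.mem_preimage, Set.mem_inter_iff,
    Set.mem_iInter, MeasurableEquiv.piEquivPiSubtypeProd, Equiv.piEquivPiSubtypeProd,
    MeasurableEquiv.coe_mk, Equiv.coe_fn_mk]
  constructor
  · rintro ⟨⟨h1, h2⟩, h3⟩
    exact ⟨⟨h1, fun j hj => h2 j hj j.2⟩, fun j => h3 j (not_not.1 j.2)⟩
  · rintro ⟨⟨h1, h2⟩, h3⟩
    exact ⟨⟨h1, fun j hj hjS => h2 ⟨j, hjS⟩ hj⟩, fun j hj => h3 ⟨j, not_not.2 hj⟩⟩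

end Piece

section Bound

variable {n : ℕ} (j0 : Fin n) (S : Finset (Fin n)) (hj0 : j0 ∉ S)

lemma mu2_pi_Ioi (v : ℝ) :
    (Measure.pi fun _ : {j : Fin n // ¬ j ∉ S} => gm) (Set.pi Set.univ fun _ => Set.Ioi v)
      = gm (Set.Ioi v) ^ S.card := by
  rw [Measure.pi_pi, Finset.prod_const, Finset.card_univ]
  congr 1
  rw [Fintype.card_congr (Equiv.subtypeEquivRight fun _ => not_not), Fintype.card_coe]

lemma piece_bound (hj0 : j0 ∉ S) (t₁ t₂ : ℝ → ℝ) (ht₁ : Measurable t₁) (ht₂ : Measurable t₂) (c : ENNReal)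
    (hc : ∀ x, 0 < x → gm (Set.Ioi (t₁ x)) ≤ c * gm (Set.Ioi (t₂ x))) (hct : c ≠ ⊤) :
    (Measure.pi fun _ : Fin n => gm) (pieceSet n t₁ j0 S) ≤
      c ^ S.card * (Measure.pi fun _ : Fin n => gm) (pieceSet n t₂ j0 S) := by
  classical
  set μ1 := Measure.pi (fun _ : {j : Fin n // j ∉ S} => gm) with hμ1
  set μ2 := Measure.pi (fun _ : {j : Fin n // ¬ j ∉ S} => gm) with hμ2
  have hmp := measurePreserving_piEquivPiSubtypeProd (fun _ : Fin n => gm) (fun j => j ∉ S)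
  have happ : ∀ (t : ℝ → ℝ), Measurable t →
      (Measure.pi fun _ : Fin n => gm) (pieceSet n t j0 S)
      = ∫⁻ b, μ2 (Prod.mk b ⁻¹' (sSet t j0 S hj0)) ∂μ1 := by
    intro t ht
    rw [pieceSet_eq_preimage t j0 S hj0,
      hmp.measure_preimage (measurable_sSet t j0 S hj0 ht).nullMeasurableSet,
      Measure.prod_apply (measurable_sSet t j0 S hj0 ht)]
  have hpre : ∀ (t : ℝ → ℝ) b, Prod.mk b ⁻¹' (sSet t j0 S hj0) =
      if b ∈ cSet j0 S hj0 then Set.pi Set.univ (fun _ => Set.Ioi (t (b ⟨j0, hj0⟩)))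
      else ∅ := by
    intro t b
    by_cases hb : b ∈ cSet j0 S hj0
    · simp only [hb, if_true]
      ext a
      simp [sSet, hb, Set.mem_pi]
    · simp only [hb, if_false]
      ext a
      simp [sSet, hb]
  rw [happ t₁ ht₁, happ t₂ ht₂, ← lintegral_const_mul' _ _ (ENNReal.pow_ne_top hct)]
  apply lintegral_mono
  intro b
  dsimp only
  rw [hpre t₁ b, hpre t₂ b]
  by_cases hb : b ∈ cSet j0 S hj0
  · simp only [hb, if_true]
    rw [mu2_pi_Ioi, mu2_pi_Ioi]
    have hx : 0 < b ⟨j0, hj0⟩ := hb.1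
    calc gm (Set.Ioi (t₁ (b ⟨j0, hj0⟩))) ^ S.card
        ≤ (c * gm (Set.Ioi (t₂ (b ⟨j0, hj0⟩)))) ^ S.card :=
          pow_le_pow_left' (hc _ hx) _
      _ = c ^ S.card * gm (Set.Ioi (t₂ (b ⟨j0, hj0⟩))) ^ S.card := mul_pow _ _ _
  · simp [hb]

end Bound

section Disjoint

variable {n : ℕ}

lemma piece_char {g : Fin n → ℝ} {j0 : Fin n} {S : Finset (Fin n)} (hj0 : j0 ∉ S)
    (hg : g ∈ pieceSet n id j0 S) (j : Fin n) :
    j ∈ S ↔ (g j0 < g j ∨ (g j0 = g j ∧ j0 < j)) := by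
  constructor
  · intro hj
    exact Or.inl (hg.2 j hj)
  · intro hlex
    by_contra hnot
    rcases eq_or_ne j j0 with rfl | hne
    · rcases hlex with h | ⟨_, h⟩ <;> exact absurd h (lt_irrefl _)
    · rcases hg.1.2 j hne hnot with h | ⟨heq, hlt⟩
      · rcases hlex with h2 | ⟨h2, _⟩ <;> simp_all <;> linarith
      · rcases hlex with h2 | ⟨_, h2⟩
        · rw [heq] at h2; exact absurd h2 (lt_irrefl _)
        · exact absurd h2 (not_lt.2 hlt.le)

lemma piece_absurd {g : Fin n → ℝ} {j0 j0' : Fin n} {S S' : Finset (Fin n)}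
    (hj0 : j0 ∉ S) (hj0' : j0' ∉ S') (hcard : S.card = S'.card)
    (hg : g ∈ pieceSet n id j0 S) (hg' : g ∈ pieceSet n id j0' S')
    (hL : g j0 < g j0' ∨ (g j0 = g j0' ∧ j0 < j0')) : False := by
  have hmem : j0' ∈ S := (piece_char hj0 hg j0').2 hL
  have hsub : insert j0' S' ⊆ S := by
    intro j hj
    rcases Finset.mem_insert.1 hj with rfl | hjS'
    · exact hmem
    · have h1 : g j0' < g j := hg'.2 j hjS'
      have h0 : g j0 ≤ g j0' := by
        rcases hL with h | ⟨h, _⟩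
        exacts [h.le, h.le]
      exact (piece_char hj0 hg j).2 (Or.inl (lt_of_le_of_lt h0 h1))
  have hlt : S'.card + 1 ≤ S.card := by
    rw [← Finset.card_insert_of_notMem hj0']
    exact Finset.card_le_card hsub
  omega

lemma piece_disjoint (m : ℕ) :
    Pairwise (Function.onFun Disjoint
      (fun p : {q : Fin n × Finset (Fin n) // q.1 ∉ q.2 ∧ q.2.card = m} =>
        pieceSet n id p.1.1 p.1.2)) := by
  rintro ⟨⟨j0, S⟩, hj0, hS⟩ ⟨⟨j0', S'⟩, hj0', hS'⟩ hpq
  rw [Function.onFun, Set.disjoint_left]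
  intro g hg hg'
  simp only at hg hg'
  have hcard : S.card = S'.card := by rw [hS, hS']
  have hne : ¬ (j0 = j0' ∧ S = S') := by
    rintro ⟨rfl, rfl⟩
    exact hpq rfl
  rcases eq_or_ne j0 j0' with rfl | hj
  · refine hne ⟨rfl, ?_⟩
    ext j
    rw [piece_char hj0 hg j, piece_char hj0' hg' j]
  · rcases lt_trichotomy (g j0) (g j0') with h | h | h
    · exact piece_absurd hj0 hj0' hcard hg hg' (Or.inl h)
    · rcases Ne.lt_or_gt hj with hlt | hlt
      · exact piece_absurd hj0 hj0' hcard hg hg' (Or.inr ⟨h, hlt⟩)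
      · exact piece_absurd hj0' hj0 hcard.symm hg' hg (Or.inr ⟨h.symm, hlt⟩)
    · exact piece_absurd hj0' hj0 hcard.symm hg' hg (Or.inl h)

end Disjoint

lemma piece_incl {n i : ℕ} (hi1 : 1 ≤ i) (hi2 : i < n) {ε : ℝ} (hε : 0 < ε) (g : Fin n → ℝ)
    (h1 : ε < ord g (i - 1) * (ord g i - ord g (i - 1))) (h2 : 0 < ord g (i - 1)) :
    ∃ (j0 : Fin n) (S : Finset (Fin n)), j0 ∉ S ∧ S.card = n - i ∧
      g ∈ pieceSet n (fun x => x + ε / x) j0 S := by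
  classical
  set σ := Tuple.sort g with hσ
  obtain ⟨hmono, htie⟩ := (Tuple.eq_sort_iff (f := g) (σ := σ)).1 hσ
  have hi1' : i - 1 < n := by omega
  set k0 : Fin n := ⟨i - 1, hi1'⟩ with hk0
  set j0 : Fin n := σ k0 with hj0def
  set ki : Fin n := ⟨i, hi2⟩ with hki
  have hordi1 : ord g (i - 1) = g j0 := by rw [ord, dif_pos hi1']
  have hordi : ord g i = g (σ ki) := by rw [ord, dif_pos hi2]
  rw [hordi1] at h1 h2
  rw [hordi] at h1
  set S : Finset (Fin n) :=
    Finset.image (fun k => σ k) (Finset.Ici ki) with hSdef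
  have hmemS : ∀ j : Fin n, j ∈ S ↔ ki ≤ σ.symm j := by
    intro j
    simp only [hSdef, Finset.mem_image, Finset.mem_Ici]
    constructor
    · rintro ⟨k, hk, rfl⟩
      rwa [Equiv.symm_apply_apply]
    · intro h
      exact ⟨σ.symm j, h, Equiv.apply_symm_apply _ _⟩
  have hj0S : j0 ∉ S := by
    rw [hmemS, hj0def, Equiv.symm_apply_apply]
    intro h
    rw [Fin.le_def] at h
    simp only [hki, hk0] at h
    omega
  have hcard : S.card = n - i := by
    rw [hSdef, Finset.card_image_of_injective _ σ.injective, Fin.card_Ici]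
  refine ⟨j0, S, hj0S, hcard, ⟨⟨h2, ?_⟩, ?_⟩⟩
  · -- lex-below for j ∉ S, j ≠ j0
    intro j hne hnotS
    set k := σ.symm j with hk
    have hjk : j = σ k := (Equiv.apply_symm_apply _ _).symm
    have hklt : k < k0 := by
      rw [hmemS] at hnotS
      have h3 : ¬ ki ≤ k := hnotS
      rw [Fin.lt_def]
      rw [Fin.le_def] at h3
      simp only [hki, hk0] at h3 ⊢
      have : k ≠ k0 := by
        intro he
        exact hne (by rw [hjk, he])
      have hne2 : (k : ℕ) ≠ i - 1 := by
        intro he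
        exact this (Fin.ext (by simpa [hk0] using he))
      omega
    have hle : g j ≤ g j0 := by
      rw [hjk, hj0def]
      exact hmono hklt.le
    rcases hle.lt_or_eq with h | h
    · exact Or.inl h
    · refine Or.inr ⟨h, ?_⟩
      rw [hjk, hj0def]
      refine htie k k0 hklt ?_
      rw [← hjk, ← hj0def]
      exact h
  · -- threshold for j ∈ S
    intro j hj
    have hki_le : g (σ ki) ≤ g j := by
      rw [hmemS] at hj
      have := hmono hj
      simpa using this
    have hdiv : ε / g j0 < g (σ ki) - g j0 := by
      rw [div_lt_iff₀ h2]
      calc ε < g j0 * (g (σ ki) - g j0) := h1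
        _ = (g (σ ki) - g j0) * g j0 := mul_comm _ _
    have : g j0 + ε / g j0 < g (σ ki) := by linarith
    linarith

lemma joint_law {Ω : Type*} [MeasurableSpace Ω] (μ : Measure Ω) [IsProbabilityMeasure μ]
    {n : ℕ} (Z : Fin n → Ω → ℝ) (hZ : ∀ j, Measurable (Z j))
    (hindep : iIndepFun Z μ)
    (hdist : ∀ j, Measure.map (Z j) μ = gaussianReal 0 1) :
    Measure.map (fun ω (j : Fin n) => Z j ω) μ = Measure.pi (fun _ => gm) := by
  refine (Measure.pi_eq fun s hs => ?_).symm
  rw [Measure.map_apply (measurable_pi_lambda _ hZ) (MeasurableSet.univ_pi hs)]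
  have hpre : (fun ω (j : Fin n) => Z j ω) ⁻¹' (Set.pi Set.univ s)
      = ⋂ j ∈ Finset.univ, Z j ⁻¹' s j := by
    ext ω
    simp [Set.mem_pi]
  rw [hpre, hindep.measure_inter_preimage_eq_mul Finset.univ (fun j _ => hs j)]
  refine Finset.prod_congr rfl fun j _ => ?_
  rw [← Measure.map_apply (hZ j) (hs j), hdist j]
  rfl

end Helpers

/-- For i.i.d. standard normal `Z_1, …, Z_n` and a 1-based index `1 ≤ i < n`,
`P(Z_{(i)}(Z_{(i+1)} - Z_{(i)}) > ε, Z_{(i)} > 0) ≤ (1 - ε e^{-1.5ε})^{n-i}`.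
(The 1-based order statistic `Z_{(i)}` is `ord (fun j => Z j ω) (i-1)`.) -/
theorem stmt_12 {Ω : Type*} [MeasurableSpace Ω] (μ : Measure Ω) [IsProbabilityMeasure μ]
    (n : ℕ) (Z : Fin n → Ω → ℝ)
    (hindep : iIndepFun Z μ)
    (hdist : ∀ j, Measure.map (Z j) μ = gaussianReal 0 1)
    (ε : ℝ) (hε : 0 < ε) (i : ℕ) (hi1 : 1 ≤ i) (hi2 : i < n) :
    μ {ω | ε < ord (fun j => Z j ω) (i - 1) *
              (ord (fun j => Z j ω) i - ord (fun j => Z j ω) (i - 1)) ∧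
           0 < ord (fun j => Z j ω) (i - 1)} ≤
      ENNReal.ofReal ((1 - ε * Real.exp (-1.5 * ε)) ^ (n - i)) := by
  classical
  have hγ0 : (gaussianReal 0 1 : Measure ℝ) ≠ 0 := IsProbabilityMeasure.ne_zero _
  have hae : ∀ j, AEMeasurable (Z j) μ := fun j => by
    by_contra h
    exact hγ0 (((Measure.map_of_not_aemeasurable h).symm.trans (hdist j)).symm)
  set Z' : Fin n → Ω → ℝ := fun j => (hae j).mk (Z j) with hZ'def
  have hZm : ∀ j, Measurable (Z' j) := fun j => (hae j).measurable_mk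
  have haeq : ∀ j, Z j =ᵐ[μ] Z' j := fun j => (hae j).ae_eq_mk
  have hall : ∀ᵐ ω ∂μ, ∀ j, Z j ω = Z' j ω := ae_all_iff.2 haeq
  have hseteq : ∀ (j : Fin n) (s : Set ℝ), μ (Z' j ⁻¹' s) = μ (Z j ⁻¹' s) := fun j s => by
    apply measure_congr
    apply Filter.eventuallyEq_set.2
    filter_upwards [haeq j] with ω hω
    simp [Set.mem_preimage, hω]
  have hdist' : ∀ j, Measure.map (Z' j) μ = gaussianReal 0 1 := fun j => by
    rw [← Measure.map_congr (haeq j)]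
    exact hdist j
  have hindep' : iIndepFun Z' μ := by
    rw [iIndepFun_iff_measure_inter_preimage_eq_mul]
    intro S sets hsets
    have h0 := hindep.measure_inter_preimage_eq_mul S hsets
    have e1 : μ (⋂ x ∈ S, Z' x ⁻¹' sets x) = μ (⋂ x ∈ S, Z x ⁻¹' sets x) := by
      apply measure_congr
      apply Filter.eventuallyEq_set.2
      filter_upwards [hall] with ω hω
      simp [Set.mem_iInter, Set.mem_preimage, hω]
    rw [e1, h0]
    exact Finset.prod_congr rfl fun j _ => (hseteq j (sets j)).symm
  have hVmeas : Measurable (fun ω (j : Fin n) => Z' j ω) := measurable_pi_lambda _ hZm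
  have hmap := joint_law μ Z' hZm hindep' hdist'
  set t₁ : ℝ → ℝ := fun x => x + ε / x with ht₁def
  have ht₁ : Measurable t₁ := measurable_id.add (measurable_const.div measurable_id)
  set ν := Measure.pi (fun _ : Fin n => gm) with hν
  have hpmeas : ∀ (t : ℝ → ℝ), Measurable t → ∀ (j0 : Fin n) (S : Finset (Fin n)),
      j0 ∉ S → MeasurableSet (pieceSet n t j0 S) := fun t ht j0 S hj0 => by
    rw [pieceSet_eq_preimage t j0 S hj0]
    exact (MeasurableEquiv.measurable _) (measurable_sSet t j0 S hj0 ht)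
  set U : Set (Fin n → ℝ) :=
    ⋃ p : {q : Fin n × Finset (Fin n) // q.1 ∉ q.2 ∧ q.2.card = n - i},
      pieceSet n t₁ p.1.1 p.1.2 with hU
  have hUmeas : MeasurableSet U :=
    MeasurableSet.iUnion fun p => hpmeas t₁ ht₁ p.1.1 p.1.2 p.2.1
  have hincl : {ω | ε < ord (fun j => Z j ω) (i - 1) *
              (ord (fun j => Z j ω) i - ord (fun j => Z j ω) (i - 1)) ∧
           0 < ord (fun j => Z j ω) (i - 1)} ⊆
      ((fun ω (j : Fin n) => Z' j ω) ⁻¹' U) ∪ {ω | ¬ ∀ j, Z j ω = Z' j ω} := by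
    intro ω hω
    by_cases hgood : ∀ j, Z j ω = Z' j ω
    · left
      obtain ⟨j0, S, hj0, hcard, hmem⟩ := piece_incl hi1 hi2 hε (fun j => Z j ω) hω.1 hω.2
      refine Set.mem_preimage.2 (Set.mem_iUnion.2 ⟨⟨(j0, S), hj0, hcard⟩, ?_⟩)
      have hfun : (fun j => Z' j ω) = (fun j => Z j ω) := funext fun j => (hgood j).symm
      show (fun j => Z' j ω) ∈ pieceSet n t₁ j0 S
      rw [hfun]
      exact hmem
    · right
      exact hgood
  have hnull : μ {ω | ¬ ∀ j, Z j ω = Z' j ω} = 0 := by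
    rw [ae_iff] at hall
    exact hall
  have hcεx : ∀ x, 0 < x → gm (Set.Ioi (t₁ x)) ≤
      ENNReal.ofReal (Real.exp (-ε)) * gm (Set.Ioi (id x)) := fun x hx => by
    show gaussianReal 0 1 (Set.Ioi (x + ε / x)) ≤
      ENNReal.ofReal (Real.exp (-ε)) * gaussianReal 0 1 (Set.Ioi x)
    exact gauss_tail hε hx
  calc μ {ω | ε < ord (fun j => Z j ω) (i - 1) *
              (ord (fun j => Z j ω) i - ord (fun j => Z j ω) (i - 1)) ∧
           0 < ord (fun j => Z j ω) (i - 1)}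
      ≤ μ (((fun ω (j : Fin n) => Z' j ω) ⁻¹' U) ∪ {ω | ¬ ∀ j, Z j ω = Z' j ω}) :=
        measure_mono hincl
    _ ≤ μ ((fun ω (j : Fin n) => Z' j ω) ⁻¹' U) + μ {ω | ¬ ∀ j, Z j ω = Z' j ω} :=
        measure_union_le _ _
    _ = ν U := by rw [hnull, add_zero, ← Measure.map_apply hVmeas hUmeas, hmap]
    _ ≤ ∑' p : {q : Fin n × Finset (Fin n) // q.1 ∉ q.2 ∧ q.2.card = n - i},
          ν (pieceSet n t₁ p.1.1 p.1.2) := measure_iUnion_le _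
    _ ≤ ∑' p : {q : Fin n × Finset (Fin n) // q.1 ∉ q.2 ∧ q.2.card = n - i},
          ENNReal.ofReal (Real.exp (-ε)) ^ (n - i) * ν (pieceSet n id p.1.1 p.1.2) := by
        refine ENNReal.tsum_le_tsum fun p => ?_
        have hb := piece_bound p.1.1 p.1.2 p.2.1 t₁ id ht₁ measurable_id
          (ENNReal.ofReal (Real.exp (-ε))) hcεx ENNReal.ofReal_ne_top
        rwa [p.2.2] at hb
    _ = ENNReal.ofReal (Real.exp (-ε)) ^ (n - i) *
          ∑' p : {q : Fin n × Finset (Fin n) // q.1 ∉ q.2 ∧ q.2.card = n - i},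
            ν (pieceSet n id p.1.1 p.1.2) := ENNReal.tsum_mul_left
    _ = ENNReal.ofReal (Real.exp (-ε)) ^ (n - i) *
          ν (⋃ p : {q : Fin n × Finset (Fin n) // q.1 ∉ q.2 ∧ q.2.card = n - i},
            pieceSet n id p.1.1 p.1.2) := by
        rw [measure_iUnion (piece_disjoint (n - i))
          (fun p => hpmeas id measurable_id p.1.1 p.1.2 p.2.1)]
    _ ≤ ENNReal.ofReal (Real.exp (-ε)) ^ (n - i) * 1 := by
        gcongr
        exact prob_le_one
    _ = ENNReal.ofReal (Real.exp (-ε) ^ (n - i)) := by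
        rw [mul_one, ← ENNReal.ofReal_pow (Real.exp_nonneg _)]
    _ ≤ ENNReal.ofReal ((1 - ε * Real.exp (-1.5 * ε)) ^ (n - i)) := by
        apply ENNReal.ofReal_le_ofReal
        exact pow_le_pow_left₀ (Real.exp_nonneg _) (exp_neg_le_aux ε hε) _
end

section
/- Let D_n = x + log n for a fixed real x, and let U_1, …, U_{n/2} be independent random variables with U_j uniformly distributed on (0,1). Then ∏_{j=k_n}^{n/2} P(j(1 − U_j^{1/j}) ≤ D_n) = ∏_{j=k_n}^{n/2} (1 − (1 − D_n/j)^j) → exp(−(1/2)e^{−x}) as n → ∞, where k_n ~ (log n)^{1+ζ} for some 0 < ζ < 2. -/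
open Real MeasureTheory Filter Finset

private lemma aux_exp_lb {t : ℝ} (h0 : 0 ≤ t) (h2 : t ≤ 1/2) :
    Real.exp (-(t + 2*t^2)) ≤ 1 - t := by
  have h := Real.add_one_le_exp (t + 2*t^2)
  have key : Real.exp (-(t+2*t^2)) * Real.exp (t+2*t^2) = 1 := by
    have h0' : -(t+2*t^2) + (t+2*t^2) = 0 := by ring
    rw [← Real.exp_add, h0', Real.exp_zero]
  nlinarith [Real.exp_pos (-(t+2*t^2)), Real.exp_pos (t+2*t^2)]

private lemma aux_measure (j : ℕ) (D : ℝ) (hj : 1 ≤ j) (hD0 : 0 ≤ D) (hDj : D ≤ j) :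
    (volume.restrict (Set.Ioo (0 : ℝ) 1))
        {u : ℝ | (j : ℝ) * (1 - u ^ ((1 : ℝ) / j)) ≤ D} =
      ENNReal.ofReal (1 - (1 - D / j) ^ j) := by
  have hj0 : (0:ℝ) < j := by exact_mod_cast hj
  set c : ℝ := (1 - D/(j:ℝ))^j with hc
  have hb0 : 0 ≤ 1 - D/(j:ℝ) := by
    rw [sub_nonneg, div_le_one hj0]; exact hDj
  have hcc0 : 0 ≤ c := pow_nonneg hb0 _
  have hjne : (j:ℝ) ≠ 0 := ne_of_gt hj0
  have hset : {u : ℝ | (j:ℝ)*(1 - u ^ ((1:ℝ)/j)) ≤ D} ∩ Set.Ioo 0 1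
      = Set.Ici c ∩ Set.Ioo 0 1 := by
    ext u
    simp only [Set.mem_inter_iff, Set.mem_setOf_eq, Set.mem_Ici, Set.mem_Ioo]
    constructor
    · rintro ⟨h, hu0, hu1⟩
      refine ⟨?_, hu0, hu1⟩
      have h1 : 1 - D/(j:ℝ) ≤ u ^ ((1:ℝ)/j) := by
        have h' : (1 - u ^ ((1:ℝ)/(j:ℝ))) ≤ D / j := (le_div_iff₀ hj0).mpr (by linarith [h])
        linarith
      calc c ≤ (u ^ ((1:ℝ)/j))^j := pow_le_pow_left₀ hb0 h1 j
        _ = u := by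
            rw [← Real.rpow_natCast (u ^ ((1:ℝ)/(j:ℝ))) j, ← Real.rpow_mul hu0.le,
              one_div, inv_mul_cancel₀ hjne, Real.rpow_one]
    · rintro ⟨hcu, hu0, hu1⟩
      refine ⟨?_, hu0, hu1⟩
      have h1 : 1 - D/(j:ℝ) ≤ u ^ ((1:ℝ)/j) := by
        calc 1 - D/(j:ℝ) = c ^ ((1:ℝ)/(j:ℝ)) := by
              rw [hc, ← Real.rpow_natCast (1 - D/(j:ℝ)) j, ← Real.rpow_mul hb0,
                mul_one_div, div_self hjne, Real.rpow_one]
          _ ≤ u ^ ((1:ℝ)/(j:ℝ)) := Real.rpow_le_rpow hcc0 hcu (by positivity)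
      have h2 : (j:ℝ)*(1 - u ^ ((1:ℝ)/j)) ≤ (j:ℝ) * (D/(j:ℝ)) :=
        mul_le_mul_of_nonneg_left (by linarith) hj0.le
      rwa [mul_div_cancel₀ _ hjne] at h2
  rw [Measure.restrict_apply' measurableSet_Ioo, hset]
  rcases eq_or_lt_of_le hcc0 with h0 | h0
  · have he : Set.Ici c ∩ Set.Ioo (0:ℝ) 1 = Set.Ioo (0:ℝ) 1 := by
      apply Set.inter_eq_right.mpr
      intro u hu
      simp only [Set.mem_Ici, ← h0]
      exact hu.1.le
    rw [he, Real.volume_Ioo, ← h0]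
  · have he : Set.Ici c ∩ Set.Ioo (0:ℝ) 1 = Set.Ico c 1 := by
      ext u
      simp only [Set.mem_inter_iff, Set.mem_Ici, Set.mem_Ioo, Set.mem_Ico]
      constructor
      · rintro ⟨h1, _, h3⟩; exact ⟨h1, h3⟩
      · rintro ⟨h1, h2⟩; exact ⟨h1, lt_of_lt_of_le h0 h1, h2⟩
    rw [he, Real.volume_Ico]

private noncomputable def pf (x : ℝ) (n j : ℕ) : ℝ := (1 - (x + Real.log n)/(j:ℝ))^j

private lemma aux_expD (x : ℝ) {n : ℕ} (hn : 1 ≤ n) :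
    Real.exp (-(x + Real.log n)) = Real.exp (-x)/n := by
  have hn0 : (0:ℝ) < n := by exact_mod_cast hn
  rw [neg_add, Real.exp_add, Real.exp_neg (Real.log n), Real.exp_log hn0, div_eq_mul_inv]

private lemma aux_p_bounds (x : ℝ) {n j : ℕ} (hn : 1 ≤ n) (hD2 : 2 ≤ x + Real.log n)
    (hj : 4*(x + Real.log n) ≤ (j:ℝ)) :
    0 ≤ pf x n j ∧ pf x n j ≤ Real.exp (-x)/n := by
  set D := x + Real.log n with hD
  have hD0 : (0:ℝ) < D := by linarith
  have hj0 : (0:ℝ) < j := by linarith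
  have hjne : (j:ℝ) ≠ 0 := ne_of_gt hj0
  have ht0 : 0 ≤ D/(j:ℝ) := by positivity
  have ht : D/(j:ℝ) ≤ 1/2 := by rw [div_le_iff₀ hj0]; linarith
  constructor
  · exact pow_nonneg (by linarith) _
  · calc pf x n j = (1 - D/(j:ℝ))^j := rfl
      _ ≤ (Real.exp (-(D/(j:ℝ))))^j :=
          pow_le_pow_left₀ (by linarith) (by linarith [Real.add_one_le_exp (-(D/(j:ℝ)))]) j
      _ = Real.exp ((j:ℝ) * -(D/(j:ℝ))) := (Real.exp_nat_mul _ j).symm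
      _ = Real.exp (-D) := by congr 1; field_simp
      _ = Real.exp (-x)/n := aux_expD x hn

private lemma aux_p_lower (x : ℝ) {n j : ℕ} (hn : 1 ≤ n) (hD2 : 2 ≤ x + Real.log n)
    (hj : 4*(x + Real.log n) ≤ (j:ℝ)) (hj3 : (x + Real.log n)^3 ≤ (j:ℝ)) :
    Real.exp (-x)/n * (1 - 2/(x + Real.log n)) ≤ pf x n j := by
  set D := x + Real.log n with hD
  have hD0 : (0:ℝ) < D := by linarith
  have hj0 : (0:ℝ) < j := by linarith
  have hjne : (j:ℝ) ≠ 0 := ne_of_gt hj0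
  have ht0 : 0 ≤ D/(j:ℝ) := by positivity
  have ht : D/(j:ℝ) ≤ 1/2 := by rw [div_le_iff₀ hj0]; linarith
  have hq : 2*D^2/(j:ℝ) ≤ 2/D := by
    rw [div_le_div_iff₀ hj0 hD0]; nlinarith [hj3]
  calc Real.exp (-x)/n * (1 - 2/D) = Real.exp (-D) * (1 - 2/D) := by rw [aux_expD x hn]
    _ ≤ Real.exp (-D) * (1 - 2*D^2/(j:ℝ)) := by
        apply mul_le_mul_of_nonneg_left (by linarith) (Real.exp_nonneg _)
    _ ≤ Real.exp (-D) * Real.exp (-(2*D^2/(j:ℝ))) := by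
        apply mul_le_mul_of_nonneg_left _ (Real.exp_nonneg _)
        linarith [Real.add_one_le_exp (-(2*D^2/(j:ℝ)))]
    _ = Real.exp ((j:ℝ) * -(D/(j:ℝ) + 2*(D/(j:ℝ))^2)) := by
        rw [← Real.exp_add]; congr 1; field_simp; ring
    _ = (Real.exp (-(D/(j:ℝ) + 2*(D/(j:ℝ))^2)))^j := Real.exp_nat_mul _ j
    _ ≤ (1 - D/(j:ℝ))^j := pow_le_pow_left₀ (Real.exp_nonneg _) (aux_exp_lb ht0 ht) j
    _ = pf x n j := rfl

private lemma aux_loglim : Tendsto (fun n : ℕ => Real.log n) atTop atTop :=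
  Real.tendsto_log_atTop.comp tendsto_natCast_atTop_atTop

private lemma aux_log3 : Tendsto (fun n : ℕ => (Real.log n)^3 / n) atTop (nhds 0) := by
  have h := (Real.tendsto_pow_log_div_mul_add_atTop 1 0 3 one_ne_zero).comp
    (tendsto_natCast_atTop_atTop (R := ℝ))
  simpa [Function.comp_def] using h

private lemma aux_half : Tendsto (fun n : ℕ => ((n/2 : ℕ):ℝ) / n) atTop (nhds (1/2)) := by
  have hlo : Tendsto (fun n : ℕ => 1/2 - (1/(n:ℝ))*(1/2)) atTop (nhds (1/2)) := by
    have hcon : Tendsto (fun _ : ℕ => (1/2:ℝ)) atTop (nhds (1/2)) := tendsto_const_nhds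
    have h2 := hcon.sub (tendsto_one_div_atTop_nhds_zero_nat.mul_const (1/2:ℝ))
    simpa using h2
  apply tendsto_of_tendsto_of_tendsto_of_le_of_le' hlo tendsto_const_nhds
  · filter_upwards [eventually_ge_atTop 1] with n hn
    have hn0 : (0:ℝ) < n := by exact_mod_cast hn
    have hc : (n:ℝ) ≤ 2*((n/2:ℕ):ℝ)+1 := by exact_mod_cast (by omega : n ≤ 2*(n/2)+1)
    rw [le_div_iff₀ hn0]
    have h1 : (1/(n:ℝ))*n = 1 := by field_simp
    nlinarith
  · filter_upwards [eventually_ge_atTop 1] with n hn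
    have hn0 : (0:ℝ) < n := by exact_mod_cast hn
    have hc : ((n/2:ℕ):ℝ)*2 ≤ n := by exact_mod_cast (by omega : (n/2)*2 ≤ n)
    rw [div_le_iff₀ hn0]; linarith

private noncomputable def mf (x : ℝ) (k : ℕ → ℕ) (n : ℕ) : ℕ :=
  max (k n) ⌈(x + Real.log n)^3⌉₊

private lemma aux_kup {ζ : ℝ} (hζ2 : ζ < 2) {k : ℕ → ℕ}
    (hk : Tendsto (fun n => (k n : ℝ) / (Real.log n) ^ (1 + ζ)) atTop (nhds 1)) :
    ∀ᶠ n : ℕ in atTop, (k n : ℝ) ≤ 2 * (Real.log n)^3 := by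
  filter_upwards [aux_loglim.eventually_ge_atTop 1,
    hk.eventually_lt_const (by norm_num : (1:ℝ) < 2)] with n h1 h2
  have hpow : (0:ℝ) < (Real.log n)^(1+ζ) := Real.rpow_pos_of_pos (by linarith) _
  rw [div_lt_iff₀ hpow] at h2
  have h3 : (Real.log n)^(1+ζ) ≤ (Real.log n)^(3:ℕ) := by
    rw [← Real.rpow_natCast (Real.log n) 3]
    exact Real.rpow_le_rpow_of_exponent_le h1 (by push_cast; linarith)
  nlinarith

private lemma aux_klim {ζ : ℝ} (hζ2 : ζ < 2) {k : ℕ → ℕ}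
    (hk : Tendsto (fun n => (k n : ℝ) / (Real.log n) ^ (1 + ζ)) atTop (nhds 1)) :
    Tendsto (fun n : ℕ => (k n : ℝ)/n) atTop (nhds 0) := by
  apply squeeze_zero' (Eventually.of_forall fun n => by positivity)
  · filter_upwards [aux_kup hζ2 hk, eventually_ge_atTop 1] with n h1 hn
    have hn0 : (0:ℝ) < n := by exact_mod_cast hn
    calc (k n:ℝ)/n ≤ 2*(Real.log n)^3/n := by gcongr
      _ = 2*((Real.log n)^3/n) := by ring
  · have := aux_log3.const_mul (2:ℝ)
    simpa using this

private lemma aux_kbig (x : ℝ) {ζ : ℝ} (hζ1 : 0 < ζ) {k : ℕ → ℕ}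
    (hk : Tendsto (fun n => (k n : ℝ) / (Real.log n) ^ (1 + ζ)) atTop (nhds 1)) :
    ∀ᶠ n : ℕ in atTop, 4*(x + Real.log n) ≤ (k n:ℝ) := by
  have hrz : Tendsto (fun n : ℕ => (Real.log n)^ζ) atTop atTop :=
    (tendsto_rpow_atTop hζ1).comp aux_loglim
  filter_upwards [aux_loglim.eventually_ge_atTop 1, aux_loglim.eventually_ge_atTop x,
    hrz.eventually_ge_atTop 16,
    hk.eventually_const_lt (by norm_num : (1/2:ℝ) < 1)] with n h1 hx h16 hhalf
  have hlog0 : (0:ℝ) < Real.log n := by linarith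
  have hpow : (0:ℝ) < (Real.log n)^(1+ζ) := Real.rpow_pos_of_pos hlog0 _
  rw [lt_div_iff₀ hpow] at hhalf
  have hsplit : (Real.log n)^(1+ζ) = Real.log n * (Real.log n)^ζ := by
    rw [Real.rpow_add hlog0, Real.rpow_one]
  nlinarith [mul_le_mul_of_nonneg_left h16 hlog0.le]

private lemma aux_mlim (x : ℝ) {ζ : ℝ} (hζ2 : ζ < 2) {k : ℕ → ℕ}
    (hk : Tendsto (fun n => (k n : ℝ) / (Real.log n) ^ (1 + ζ)) atTop (nhds 1)) :
    Tendsto (fun n : ℕ => (mf x k n : ℝ)/n) atTop (nhds 0) := by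
  apply squeeze_zero' (Eventually.of_forall fun n => by positivity)
    (g := fun n : ℕ => (k n:ℝ)/n + (8*((Real.log n)^3/n) + 1/n))
  · filter_upwards [aux_loglim.eventually_ge_atTop 1, aux_loglim.eventually_ge_atTop (-x),
      aux_loglim.eventually_ge_atTop x, eventually_ge_atTop 1] with n h1 hx hx2 hn
    have hn0 : (0:ℝ) < n := by exact_mod_cast hn
    have hD0 : (0:ℝ) ≤ x + Real.log n := by linarith
    have hcube : (x + Real.log n)^3 ≤ 8*(Real.log n)^3 := by
      nlinarith [pow_le_pow_left₀ hD0 (show x + Real.log n ≤ 2*Real.log n by linarith) 3]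
    have hceil : ((⌈(x + Real.log n)^3⌉₊ : ℕ):ℝ) < (x + Real.log n)^3 + 1 :=
      Nat.ceil_lt_add_one (by positivity)
    have hmax : ((mf x k n : ℕ):ℝ) ≤ (k n:ℝ) + (8*(Real.log n)^3 + 1) := by
      have : (mf x k n : ℕ) ≤ k n + ⌈(x + Real.log n)^3⌉₊ := by
        unfold mf; omega
      calc ((mf x k n : ℕ):ℝ) ≤ (k n:ℝ) + ((⌈(x + Real.log n)^3⌉₊ : ℕ):ℝ) := by
            exact_mod_cast this
        _ ≤ (k n:ℝ) + (8*(Real.log n)^3 + 1) := by linarith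
    calc ((mf x k n : ℕ):ℝ)/n ≤ ((k n:ℝ) + (8*(Real.log n)^3 + 1))/n := by gcongr
      _ = (k n:ℝ)/n + (8*((Real.log n)^3/n) + 1/n) := by ring
  · have := (aux_klim hζ2 hk).add ((aux_log3.const_mul (8:ℝ)).add
      tendsto_one_div_atTop_nhds_zero_nat)
    simpa using this

private noncomputable def Sf (x : ℝ) (k : ℕ → ℕ) (n : ℕ) : ℝ :=
  ∑ j ∈ Finset.Icc (k n) (n/2), pf x n j
private noncomputable def Tf (x : ℝ) (k : ℕ → ℕ) (n : ℕ) : ℝ :=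
  ∑ j ∈ Finset.Icc (k n) (n/2), (pf x n j)^2

private lemma aux_main (x : ℝ) {ζ : ℝ} (hζ1 : 0 < ζ) (hζ2 : ζ < 2) {k : ℕ → ℕ}
    (hk : Tendsto (fun n => (k n : ℝ) / (Real.log n) ^ (1 + ζ)) atTop (nhds 1)) :
    Tendsto (fun n : ℕ => ∏ j ∈ Finset.Icc (k n) (n / 2),
        (1 - (1 - (x + Real.log n) / j) ^ j))
      atTop (nhds (Real.exp (-(1 / 2) * Real.exp (-x)))) := by
  have hklim := aux_klim hζ2 hk
  have hmlim := aux_mlim x hζ2 hk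
  have hDlim : Tendsto (fun n : ℕ => x + Real.log n) atTop atTop :=
    tendsto_atTop_add_const_left _ x aux_loglim
  -- master eventuality
  have hE : ∀ᶠ n : ℕ in atTop, 1 ≤ n ∧ 2 ≤ x + Real.log n ∧ 4*(x + Real.log n) ≤ (k n:ℝ)
      ∧ Real.exp (-x)/(n:ℝ) ≤ 1/2 ∧ (mf x k n : ℝ) ≤ ((n/2:ℕ):ℝ) := by
    have e4 : ∀ᶠ n : ℕ in atTop, Real.exp (-x)/(n:ℝ) ≤ 1/2 := by
      have h0 : Tendsto (fun n : ℕ => Real.exp (-x) * (1/(n:ℝ))) atTop (nhds 0) := by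
        simpa using tendsto_one_div_atTop_nhds_zero_nat.const_mul (Real.exp (-x))
      filter_upwards [h0.eventually_lt_const (by norm_num : (0:ℝ) < 1/2)] with n h
      rw [div_eq_mul_one_div]; linarith
    have e5 : ∀ᶠ n : ℕ in atTop, (mf x k n : ℝ) ≤ ((n/2:ℕ):ℝ) := by
      filter_upwards [hmlim.eventually_lt_const (by norm_num : (0:ℝ) < 1/3),
        aux_half.eventually_const_lt (by norm_num : (1/3:ℝ) < 1/2),
        eventually_ge_atTop 1] with n hm hh hn
      have hn0 : (0:ℝ) < n := by exact_mod_cast hn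
      have h1 : (mf x k n:ℝ)/n < ((n/2:ℕ):ℝ)/n := lt_trans hm hh
      have h2 := mul_lt_mul_of_pos_right h1 hn0
      rw [div_mul_cancel₀ _ (ne_of_gt hn0), div_mul_cancel₀ _ (ne_of_gt hn0)] at h2
      exact h2.le
    filter_upwards [eventually_ge_atTop 1, hDlim.eventually_ge_atTop 2,
      aux_kbig x hζ1 hk, e4, e5] with n a b c d e
    exact ⟨a, b, c, d, e⟩
  -- upper bound on S
  have hSU : ∀ᶠ n : ℕ in atTop,
      Sf x k n ≤ (((n/2:ℕ):ℝ)/n + 1/n) * Real.exp (-x) := by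
    filter_upwards [hE] with n ⟨hn, hD2, hkb, he, hm⟩
    have hn0 : (0:ℝ) < n := by exact_mod_cast hn
    have hb : ∀ j ∈ Finset.Icc (k n) (n/2), pf x n j ≤ Real.exp (-x)/n := by
      intro j hj
      have hjk : (k n:ℝ) ≤ j := by exact_mod_cast (Finset.mem_Icc.mp hj).1
      exact (aux_p_bounds x hn hD2 (le_trans hkb hjk)).2
    calc Sf x k n ≤ (Finset.Icc (k n) (n/2)).card • (Real.exp (-x)/n) :=
          Finset.sum_le_card_nsmul _ _ _ hb
      _ = ((Finset.Icc (k n) (n/2)).card :ℝ) * (Real.exp (-x)/n) := nsmul_eq_mul _ _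
      _ ≤ (((n/2:ℕ):ℝ) + 1) * (Real.exp (-x)/n) := by
          apply mul_le_mul_of_nonneg_right _ (by positivity)
          have hcd : (Finset.Icc (k n) (n/2)).card ≤ n/2 + 1 := by
            rw [Nat.card_Icc]; omega
          exact_mod_cast hcd
      _ = (((n/2:ℕ):ℝ)/n + 1/n) * Real.exp (-x) := by ring
  -- lower bound on S
  have hLS : ∀ᶠ n : ℕ in atTop,
      (((n/2:ℕ):ℝ)/n + 1/n - (mf x k n:ℝ)/n) * Real.exp (-x) * (1 - 2/(x+Real.log n))
        ≤ Sf x k n := by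
    filter_upwards [hE] with n ⟨hn, hD2, hkb, he, hmle⟩
    have hn0 : (0:ℝ) < n := by exact_mod_cast hn
    have hsub : Finset.Icc (mf x k n) (n/2) ⊆ Finset.Icc (k n) (n/2) :=
      Finset.Icc_subset_Icc_left (le_max_left _ _)
    have hp0 : ∀ j ∈ Finset.Icc (k n) (n/2), 0 ≤ pf x n j := by
      intro j hj
      have hjk : (k n:ℝ) ≤ j := by exact_mod_cast (Finset.mem_Icc.mp hj).1
      exact (aux_p_bounds x hn hD2 (le_trans hkb hjk)).1
    have h1 : ∑ j ∈ Finset.Icc (mf x k n) (n/2), pf x n j ≤ Sf x k n :=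
      Finset.sum_le_sum_of_subset_of_nonneg hsub (fun j hj _ => hp0 j hj)
    have h2 : ∀ j ∈ Finset.Icc (mf x k n) (n/2),
        Real.exp (-x)/n * (1 - 2/(x+Real.log n)) ≤ pf x n j := by
      intro j hj
      obtain ⟨hj1, _⟩ := Finset.mem_Icc.mp hj
      have hkm : k n ≤ j := le_trans (le_max_left _ _) hj1
      have hjk : 4*(x+Real.log n) ≤ (j:ℝ) :=
        le_trans hkb (by exact_mod_cast hkm)
      have hj3 : (x+Real.log n)^3 ≤ (j:ℝ) := by
        have hcj : ⌈(x+Real.log n)^3⌉₊ ≤ j := le_trans (le_max_right _ _) hj1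
        calc (x+Real.log n)^3 ≤ (⌈(x+Real.log n)^3⌉₊:ℝ) := Nat.le_ceil _
          _ ≤ j := by exact_mod_cast hcj
      exact aux_p_lower x hn hD2 hjk hj3
    have h3 : ((Finset.Icc (mf x k n) (n/2)).card : ℝ)
        * (Real.exp (-x)/n * (1 - 2/(x+Real.log n)))
        ≤ ∑ j ∈ Finset.Icc (mf x k n) (n/2), pf x n j := by
      have := Finset.card_nsmul_le_sum _ _ _ h2
      rwa [nsmul_eq_mul] at this
    have hmn : mf x k n ≤ n/2 + 1 := by
      have : (mf x k n:ℝ) ≤ ((n/2:ℕ):ℝ) := hmle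
      have h' : mf x k n ≤ n/2 := by exact_mod_cast this
      omega
    have hcard : ((Finset.Icc (mf x k n) (n/2)).card : ℝ)
        = ((n/2:ℕ):ℝ) + 1 - (mf x k n:ℝ) := by
      rw [Nat.card_Icc, Nat.cast_sub hmn]; push_cast; ring
    calc (((n/2:ℕ):ℝ)/n + 1/n - (mf x k n:ℝ)/n) * Real.exp (-x) * (1 - 2/(x+Real.log n))
        = (((n/2:ℕ):ℝ) + 1 - (mf x k n:ℝ))
          * (Real.exp (-x)/n * (1 - 2/(x+Real.log n))) := by ring
      _ = ((Finset.Icc (mf x k n) (n/2)).card : ℝ)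
          * (Real.exp (-x)/n * (1 - 2/(x+Real.log n))) := by rw [hcard]
      _ ≤ ∑ j ∈ Finset.Icc (mf x k n) (n/2), pf x n j := h3
      _ ≤ Sf x k n := h1
  -- upper bound on T
  have hTV : ∀ᶠ n : ℕ in atTop,
      Tf x k n ≤ (((n/2:ℕ):ℝ)/n + 1/n) * (Real.exp (-x) * Real.exp (-x)) * (1/n) := by
    filter_upwards [hE] with n ⟨hn, hD2, hkb, he, hm⟩
    have hn0 : (0:ℝ) < n := by exact_mod_cast hn
    have hb : ∀ j ∈ Finset.Icc (k n) (n/2), (pf x n j)^2 ≤ (Real.exp (-x)/n)^2 := by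
      intro j hj
      have hjk : (k n:ℝ) ≤ j := by exact_mod_cast (Finset.mem_Icc.mp hj).1
      obtain ⟨hp0, hpb⟩ := aux_p_bounds x hn hD2 (le_trans hkb hjk)
      exact pow_le_pow_left₀ hp0 hpb 2
    calc Tf x k n ≤ (Finset.Icc (k n) (n/2)).card • ((Real.exp (-x)/n)^2) :=
          Finset.sum_le_card_nsmul _ _ _ hb
      _ = ((Finset.Icc (k n) (n/2)).card :ℝ) * ((Real.exp (-x)/n)^2) := nsmul_eq_mul _ _
      _ ≤ (((n/2:ℕ):ℝ) + 1) * ((Real.exp (-x)/n)^2) := by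
          apply mul_le_mul_of_nonneg_right _ (by positivity)
          have hcd : (Finset.Icc (k n) (n/2)).card ≤ n/2 + 1 := by
            rw [Nat.card_Icc]; omega
          exact_mod_cast hcd
      _ = (((n/2:ℕ):ℝ)/n + 1/n) * (Real.exp (-x) * Real.exp (-x)) * (1/n) := by ring
  -- limits of the bounds
  have hU : Tendsto (fun n : ℕ => (((n/2:ℕ):ℝ)/n + 1/n) * Real.exp (-x))
      atTop (nhds (Real.exp (-x)/2)) := by
    have h := (aux_half.add tendsto_one_div_atTop_nhds_zero_nat).mul_const (Real.exp (-x))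
    have hv : (1/2 + 0) * Real.exp (-x) = Real.exp (-x)/2 := by ring
    rwa [hv] at h
  have hfac : Tendsto (fun n : ℕ => 1 - 2/(x+Real.log n)) atTop (nhds 1) := by
    have h2D : Tendsto (fun n : ℕ => 2/(x+Real.log n)) atTop (nhds 0) := by
      have h := hDlim.inv_tendsto_atTop.const_mul (2:ℝ)
      simpa [div_eq_mul_inv] using h
    have h := (tendsto_const_nhds :
        Tendsto (fun _ : ℕ => (1:ℝ)) atTop (nhds 1)).sub h2D
    simpa using h
  have hL : Tendsto (fun n : ℕ =>
      (((n/2:ℕ):ℝ)/n + 1/n - (mf x k n:ℝ)/n) * Real.exp (-x) * (1 - 2/(x+Real.log n)))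
      atTop (nhds (Real.exp (-x)/2)) := by
    have h := (((aux_half.add tendsto_one_div_atTop_nhds_zero_nat).sub hmlim).mul_const
      (Real.exp (-x))).mul hfac
    have hv : (1/2 + 0 - 0) * Real.exp (-x) * 1 = Real.exp (-x)/2 := by ring
    rwa [hv] at h
  have hV : Tendsto (fun n : ℕ =>
      (((n/2:ℕ):ℝ)/n + 1/n) * (Real.exp (-x) * Real.exp (-x)) * (1/n))
      atTop (nhds 0) := by
    have h := ((aux_half.add tendsto_one_div_atTop_nhds_zero_nat).mul_const
      (Real.exp (-x) * Real.exp (-x))).mul tendsto_one_div_atTop_nhds_zero_nat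
    have hv : (1/2 + 0) * (Real.exp (-x) * Real.exp (-x)) * 0 = 0 := by ring
    rwa [hv] at h
  have hSt : Tendsto (Sf x k) atTop (nhds (Real.exp (-x)/2)) :=
    tendsto_of_tendsto_of_tendsto_of_le_of_le' hL hU hLS hSU
  have hTt : Tendsto (Tf x k) atTop (nhds 0) :=
    squeeze_zero' (Eventually.of_forall fun n =>
      Finset.sum_nonneg fun j _ => sq_nonneg _) hTV hV
  -- product bounds
  have hPu : ∀ᶠ n : ℕ in atTop,
      ∏ j ∈ Finset.Icc (k n) (n/2), (1 - pf x n j) ≤ Real.exp (-(Sf x k n)) := by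
    filter_upwards [hE] with n ⟨hn, hD2, hkb, he, hm⟩
    have hb : ∀ j ∈ Finset.Icc (k n) (n/2),
        0 ≤ pf x n j ∧ pf x n j ≤ Real.exp (-x)/n := by
      intro j hj
      have hjk : (k n:ℝ) ≤ j := by exact_mod_cast (Finset.mem_Icc.mp hj).1
      exact aux_p_bounds x hn hD2 (le_trans hkb hjk)
    calc ∏ j ∈ Finset.Icc (k n) (n/2), (1 - pf x n j)
        ≤ ∏ j ∈ Finset.Icc (k n) (n/2), Real.exp (-(pf x n j)) := by
          apply Finset.prod_le_prod
          · intro j hj; have := hb j hj; linarith [this.1, this.2]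
          · intro j hj
            linarith [Real.add_one_le_exp (-(pf x n j))]
      _ = Real.exp (∑ j ∈ Finset.Icc (k n) (n/2), -(pf x n j)) :=
          (Real.exp_sum _ _).symm
      _ = Real.exp (-(Sf x k n)) := by
          rw [Finset.sum_neg_distrib]; rfl
  have hPl : ∀ᶠ n : ℕ in atTop,
      Real.exp (-(Sf x k n) - 2*(Tf x k n))
        ≤ ∏ j ∈ Finset.Icc (k n) (n/2), (1 - pf x n j) := by
    filter_upwards [hE] with n ⟨hn, hD2, hkb, he, hm⟩
    have hb : ∀ j ∈ Finset.Icc (k n) (n/2),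
        0 ≤ pf x n j ∧ pf x n j ≤ 1/2 := by
      intro j hj
      have hjk : (k n:ℝ) ≤ j := by exact_mod_cast (Finset.mem_Icc.mp hj).1
      obtain ⟨h0, h1⟩ := aux_p_bounds x hn hD2 (le_trans hkb hjk)
      exact ⟨h0, le_trans h1 he⟩
    have hsum : -(Sf x k n) - 2*(Tf x k n)
        = ∑ j ∈ Finset.Icc (k n) (n/2), -(pf x n j + 2*(pf x n j)^2) := by
      simp only [Sf, Tf, neg_add, Finset.sum_add_distrib, Finset.sum_neg_distrib,
        Finset.mul_sum]
      ring
    rw [hsum, Real.exp_sum]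
    apply Finset.prod_le_prod
    · intro j hj; exact Real.exp_nonneg _
    · intro j hj
      exact aux_exp_lb (hb j hj).1 (hb j hj).2
  -- conclude
  show Tendsto (fun n : ℕ => ∏ j ∈ Finset.Icc (k n) (n/2), (1 - pf x n j)) atTop _
  have hexpU : Tendsto (fun n : ℕ => Real.exp (-(Sf x k n)))
      atTop (nhds (Real.exp (-(1/2) * Real.exp (-x)))) := by
    have harg : Tendsto (fun n : ℕ => -(Sf x k n)) atTop (nhds (-(1/2) * Real.exp (-x))) := by
      have h := hSt.neg
      have hv : -(Real.exp (-x)/2) = -(1/2) * Real.exp (-x) := by ring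
      rwa [hv] at h
    exact (Real.continuous_exp.tendsto _).comp harg
  have hexpL : Tendsto (fun n : ℕ => Real.exp (-(Sf x k n) - 2*(Tf x k n)))
      atTop (nhds (Real.exp (-(1/2) * Real.exp (-x)))) := by
    have harg : Tendsto (fun n : ℕ => -(Sf x k n) - 2*(Tf x k n))
        atTop (nhds (-(1/2) * Real.exp (-x))) := by
      have h := hSt.neg.sub (hTt.const_mul (2:ℝ))
      have hv : -(Real.exp (-x)/2) - 2*0 = -(1/2) * Real.exp (-x) := by ring
      rwa [hv] at h
    exact (Real.continuous_exp.tendsto _).comp harg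
  exact tendsto_of_tendsto_of_tendsto_of_le_of_le' hexpL hexpU hPl hPu

/-- For `D_n = x + log n` and independent `U_j` uniform on `(0,1)`:
each probability `P(j(1 - U_j^{1/j}) ≤ D_n)` equals `1 - (1 - D_n/j)^j`
(for `0 ≤ D ≤ j`), and the product of these over `k_n ≤ j ≤ n/2`, where
`k_n ~ (log n)^{1+ζ}` with `0 < ζ < 2`, converges to `exp(-(1/2)e^{-x})`. -/
theorem stmt_14 (x : ℝ) (ζ : ℝ) (hζ1 : 0 < ζ) (hζ2 : ζ < 2) (k : ℕ → ℕ)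
    (hk : Tendsto (fun n => (k n : ℝ) / (Real.log n) ^ (1 + ζ)) atTop (nhds 1)) :
    (∀ (j : ℕ) (D : ℝ), 1 ≤ j → 0 ≤ D → D ≤ j →
        (volume.restrict (Set.Ioo (0 : ℝ) 1))
            {u : ℝ | (j : ℝ) * (1 - u ^ ((1 : ℝ) / j)) ≤ D} =
          ENNReal.ofReal (1 - (1 - D / j) ^ j)) ∧
      Tendsto
        (fun n : ℕ =>
          ∏ j ∈ Finset.Icc (k n) (n / 2), (1 - (1 - (x + Real.log n) / j) ^ j))
        atTop (nhds (Real.exp (-(1 / 2) * Real.exp (-x)))) :=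
  ⟨fun j D hj hD0 hDj => aux_measure j D hj hD0 hDj, aux_main x hζ1 hζ2 hk⟩
end
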